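/- Let A be a definite max-plus matrix, σ a permutation maximizing Σ_i A_{iσ(i)} (a maximal permutation), and A' the definite form of A with respect to σ, defined by A'_{ij} = A_{iσ(j)} - A_{jσ(j)}. Then A' is again definite and eig(A') = eig(A). -/

import Mathlib

namespace MaxPlus

/-- Max-plus (tropical) matrix product over `EReal` (`⊥ = -∞` is the max-plus zero,
`+` is the max-plus multiplication, `⊔`/`⨆` is the max-plus addition). -/
noncomputable def mmul {n : ℕ} (A B : Matrix (Fin n) (Fin n) EReal) : Matrix (Fin n) (Fin n) EReal :=
  fun i j => ⨆ k, A i k + B k j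

/-- The max-plus identity matrix. -/
noncomputable def mId (n : ℕ) : Matrix (Fin n) (Fin n) EReal := fun i j => if i = j then 0 else ⊥

/-- Max-plus matrix powers. -/
noncomputable def mpow {n : ℕ} (A : Matrix (Fin n) (Fin n) EReal) : ℕ → Matrix (Fin n) (Fin n) EReal
  | 0 => mId n
  | m + 1 => mmul (mpow A m) A

/-- The max-plus Kleene star `A* = I ⊕ A ⊕ A² ⊕ ⋯` (entrywise supremum of all powers). -/
noncomputable def mstar {n : ℕ} (A : Matrix (Fin n) (Fin n) EReal) : Matrix (Fin n) (Fin n) EReal :=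
  fun i j => ⨆ m, mpow A m i j

/-- Weight of the cycle determined by the list `l = [i₁,…,i_k]`,
namely `A i₁ i₂ + ⋯ + A i_k i₁`. -/
noncomputable def cycleWeight {n : ℕ} (A : Matrix (Fin n) (Fin n) EReal) (l : List (Fin n)) : EReal :=
  ((l.zip (l.rotate 1)).map fun p => A p.1 p.2).sum

/-- A nonempty list of pairwise distinct indices, representing an elementary cycle. -/
def IsCycle {n : ℕ} (l : List (Fin n)) : Prop := l ≠ [] ∧ l.Nodup

/-- All elementary cycles have nonpositive weight, i.e. the maximal cycle mean `λ(A) ≤ 0`. -/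
def CycleBound {n : ℕ} (A : Matrix (Fin n) (Fin n) EReal) : Prop :=
  ∀ l : List (Fin n), IsCycle l → cycleWeight A l ≤ 0

/-- A definite matrix: maximal cycle mean `0` and zero (max-plus unit) diagonal.
(The diagonal entries give cycles of weight `0`, so `λ(A) = 0` is equivalent to
`CycleBound A` here.) -/
def Definite {n : ℕ} (A : Matrix (Fin n) (Fin n) EReal) : Prop :=
  CycleBound A ∧ ∀ i, A i i = 0

/-- Max-plus action of a matrix on a vector: `(A ⊙ x)_i = max_j (A_{ij} + x_j)`. -/
noncomputable def mapVec {n : ℕ} (A : Matrix (Fin n) (Fin n) EReal) (x : Fin n → EReal) :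
    Fin n → EReal :=
  fun i => ⨆ j, A i j + x j

/-- The max-plus eigenspace of `A` for the eigenvalue `0`. -/
def eig {n : ℕ} (A : Matrix (Fin n) (Fin n) EReal) : Set (Fin n → EReal) :=
  {x | mapVec A x = x}

/-- The max-plus column span of a matrix. -/
def mspan {n : ℕ} (A : Matrix (Fin n) (Fin n) EReal) : Set (Fin n → EReal) :=
  {y | ∃ α : Fin n → EReal, y = fun i => ⨆ j, α j + A i j}

/-! ### Auxiliary material -/

/-- Coercion `ℝ → EReal` as an additive monoid hom. -/
noncomputable def erealHom : ℝ →+ EReal := ⟨⟨Real.toEReal, EReal.coe_zero⟩, EReal.coe_add⟩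

lemma coe_finset_sum {α : Type*} (s : Finset α) (r : α → ℝ) :
    ((∑ i ∈ s, r i : ℝ) : EReal) = ∑ i ∈ s, (r i : EReal) :=
  map_sum erealHom r s

/-- A sum of `EReal`s none of which is `⊥` is not `⊥`. -/
lemma sum_ne_bot {α : Type*} (s : Finset α) (f : α → EReal) (h : ∀ i ∈ s, f i ≠ ⊥) :
    ∑ i ∈ s, f i ≠ ⊥ := by
  classical
  induction s using Finset.cons_induction with
  | empty => simp
  | cons a s ha ih =>
    rw [Finset.sum_cons]
    intro hc
    rcases EReal.add_eq_bot_iff.mp hc with h1 | h1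
    · exact h a (Finset.mem_cons_self a s) h1
    · exact ih (fun i hi => h i (Finset.mem_cons_of_mem hi)) h1

/-- cycle weight as a sum over the `formPerm` of the list. -/
lemma cycleWeight_eq_sum {n : ℕ} (B : Matrix (Fin n) (Fin n) EReal) (l : List (Fin n))
    (hl : l.Nodup) :
    cycleWeight B l = ∑ i ∈ l.toFinset, B i (l.formPerm i) := by
  rw [List.sum_toFinset _ hl]
  unfold cycleWeight
  congr 1
  apply List.ext_getElem
  · simp
  · intro k h1 h2
    simp only [List.getElem_map, List.getElem_zip, List.getElem_rotate, List.length_rotate]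
    rw [List.formPerm_apply_getElem _ hl]

/-- A sum over a finset stable under a permutation can be reindexed by the permutation. -/
lemma sum_perm_on {α M : Type*} [DecidableEq α] [AddCommMonoid M] (π : Equiv.Perm α)
    (s : Finset α) (hs : ∀ i ∈ s, π i ∈ s) (f : α → M) :
    ∑ i ∈ s, f (π i) = ∑ i ∈ s, f i := by
  have himg : s.image π = s := by
    apply Finset.eq_of_subset_of_card_le
    · intro x hx
      obtain ⟨a, ha, rfl⟩ := Finset.mem_image.mp hx
      exact hs a ha
    · rw [Finset.card_image_of_injective _ π.injective]
  conv_rhs => rw [← himg]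
  rw [Finset.sum_image (fun a _ b _ h => π.injective h)]

/-- The orbit of `j` under a permutation `τ`, as a finset. -/
noncomputable def orb {n : ℕ} (τ : Equiv.Perm (Fin n)) (j : Fin n) : Finset (Fin n) :=
  Finset.univ.filter (fun i => τ.SameCycle j i)

lemma mem_orb {n : ℕ} {τ : Equiv.Perm (Fin n)} {j i : Fin n} :
    i ∈ orb τ j ↔ τ.SameCycle j i := by simp [orb]

lemma self_mem_orb {n : ℕ} (τ : Equiv.Perm (Fin n)) (j : Fin n) : j ∈ orb τ j :=
  mem_orb.mpr (Equiv.Perm.SameCycle.refl τ j)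

lemma apply_mem_orb {n : ℕ} {τ : Equiv.Perm (Fin n)} {j i : Fin n} (h : i ∈ orb τ j) :
    τ i ∈ orb τ j :=
  mem_orb.mpr ((mem_orb.mp h).apply_right)

lemma inv_apply_mem_orb {n : ℕ} {τ : Equiv.Perm (Fin n)} {j i : Fin n} (h : i ∈ orb τ j) :
    τ⁻¹ i ∈ orb τ j := by
  have := apply_mem_orb (τ := τ) (j := j) (i := τ⁻¹ i)
  rw [mem_orb] at *
  rw [← Equiv.Perm.sameCycle_apply_right, Equiv.Perm.coe_inv, Equiv.apply_symm_apply]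
  exact h

/-- The key propagation lemma: if all inequalities `r j + x (τ j) ≤ x j` hold and every
orbit sum of `r` vanishes, then all the inequalities are equalities. -/
lemma keyL {n : ℕ} (τ : Equiv.Perm (Fin n)) (r : Fin n → ℝ) (x : Fin n → EReal)
    (hle : ∀ j, (r j : EReal) + x (τ j) ≤ x j)
    (hcyc : ∀ j, ∑ i ∈ orb τ j, r i = 0) :
    ∀ j, (r j : EReal) + x (τ j) = x j := by
  classical
  have fwd : ∀ i, x i = ⊥ → ∀ k : ℕ, x ((τ ^ k) i) = ⊥ := by
    intro i hi k
    induction k with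
    | zero => simpa using hi
    | succ k ih =>
      have h := hle ((τ ^ k) i)
      rw [ih] at h
      have hb : x (τ ((τ ^ k) i)) = ⊥ := by
        by_contra hne
        have : (↑(r ((τ ^ k) i)) : EReal) + x (τ ((τ ^ k) i)) = ⊥ := le_bot_iff.mp h
        rcases EReal.add_eq_bot_iff.mp this with h1 | h1
        · exact EReal.coe_ne_bot _ h1
        · exact hne h1
      have hpow : (τ ^ (k + 1)) i = τ ((τ ^ k) i) := by
        rw [pow_succ']
        rfl
      rw [hpow]
      exact hb
  have bwd : ∀ m, x (τ m) = ⊤ → x m = ⊤ := by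
    intro m hm
    have h := hle m
    rw [hm, EReal.add_top_of_ne_bot (EReal.coe_ne_bot _)] at h
    exact top_le_iff.mp h
  have bwdk : ∀ k : ℕ, ∀ m, x ((τ ^ k) m) = ⊤ → x m = ⊤ := by
    intro k
    induction k with
    | zero => intro m hm; simpa using hm
    | succ k ih =>
      intro m hm
      have hpow : (τ ^ (k + 1)) m = (τ ^ k) (τ m) := by
        rw [pow_succ]
        rfl
      rw [hpow] at hm
      exact bwd m (ih (τ m) hm)
  intro j
  by_cases hbot : ∃ i ∈ orb τ j, x i = ⊥
  · obtain ⟨i, hiorb, hib⟩ := hbot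
    have hall : ∀ m ∈ orb τ j, x m = ⊥ := by
      intro m hm
      have h1 : τ.SameCycle i m := (mem_orb.mp hiorb).symm.trans (mem_orb.mp hm)
      obtain ⟨k, -, hk⟩ := h1.exists_pow_eq'
      rw [← hk]
      exact fwd i hib k
    rw [hall j (self_mem_orb τ j), hall (τ j) (apply_mem_orb (self_mem_orb τ j)),
      EReal.add_bot]
  · by_cases htop : ∃ i ∈ orb τ j, x i = ⊤
    · obtain ⟨i, hiorb, hit⟩ := htop
      have hall : ∀ m ∈ orb τ j, x m = ⊤ := by
        intro m hm
        have h1 : τ.SameCycle m i := (mem_orb.mp hm).symm.trans (mem_orb.mp hiorb)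
        obtain ⟨k, -, hk⟩ := h1.exists_pow_eq'
        exact bwdk k m (by rw [hk]; exact hit)
      rw [hall j (self_mem_orb τ j), hall (τ j) (apply_mem_orb (self_mem_orb τ j)),
        EReal.add_top_of_ne_bot (EReal.coe_ne_bot _)]
    · push_neg at hbot htop
      have hxy : ∀ m ∈ orb τ j, x m = ((x m).toReal : EReal) := fun m hm =>
        (EReal.coe_toReal (htop m hm) (hbot m hm)).symm
      have hler : ∀ m ∈ orb τ j, r m + (x (τ m)).toReal ≤ (x m).toReal := by
        intro m hm
        have h := hle m
        rw [hxy m hm, hxy (τ m) (apply_mem_orb hm)] at h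
        exact_mod_cast h
      have hsum : ∑ m ∈ orb τ j, (r m + (x (τ m)).toReal) = ∑ m ∈ orb τ j, (x m).toReal := by
        rw [Finset.sum_add_distrib, hcyc j, zero_add]
        exact sum_perm_on τ (orb τ j) (fun i hi => apply_mem_orb hi) (fun m => (x m).toReal)
      have heq := (Finset.sum_eq_sum_iff_of_le hler).mp hsum j (self_mem_orb τ j)
      rw [hxy j (self_mem_orb τ j), hxy (τ j) (apply_mem_orb (self_mem_orb τ j))]
      exact_mod_cast heq

/-- For a definite matrix `A` and a maximal permutation `σ`, the definite form
`A'_{ij} = A_{iσ(j)} - A_{jσ(j)}` is again definite and has the same eigenspace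
as `A`. -/
theorem definite_form_definite_and_same_eig {n : ℕ} (A : Matrix (Fin n) (Fin n) EReal)
    (hd : Definite A) (σ : Equiv.Perm (Fin n))
    (hσ : ∀ ρ : Equiv.Perm (Fin n), (∑ i, A i (ρ i)) ≤ ∑ i, A i (σ i)) :
    Definite (fun i j => A i (σ j) - A j (σ j)) ∧
      eig (fun i j => A i (σ j) - A j (σ j)) = eig A := by
  classical
  obtain ⟨hcb, hdiag⟩ := hd
  -- Step 0 : the permanent is at least 0
  have hs0 : (0 : EReal) ≤ ∑ i, A i (σ i) := by
    have h := hσ 1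
    simpa [hdiag] using h
  -- Step 1 : no entry A i (σ i) is ⊥
  have hbot : ∀ i, A i (σ i) ≠ ⊥ := by
    intro i hib
    have hsb : (∑ k, A k (σ k)) = ⊥ := by
      rw [← Finset.add_sum_erase _ _ (Finset.mem_univ i), hib, EReal.bot_add]
    rw [hsb] at hs0
    simp at hs0
  -- Step F1 : every σ-orbit sum is ≤ 0
  have horb_le : ∀ j, ∑ i ∈ orb σ j, A i (σ i) ≤ 0 := by
    intro j
    by_cases hj : σ j = j
    · have horbj : orb σ j = {j} := by
        ext i
        simp only [mem_orb, Finset.mem_singleton]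
        constructor
        · rintro ⟨k, hk⟩
          rw [Equiv.Perm.zpow_apply_eq_self_of_apply_eq_self hj k] at hk
          exact hk.symm
        · rintro rfl; exact Equiv.Perm.SameCycle.refl σ i
      rw [horbj, Finset.sum_singleton, hj, hdiag]
    · have hmem : j ∈ σ.support := Equiv.Perm.mem_support.mpr hj
      have hne : σ.toList j ≠ [] := by
        rw [Ne, Equiv.Perm.toList_eq_nil_iff]
        simpa using hmem
      have hnd := σ.nodup_toList j
      have hcw := hcb (σ.toList j) ⟨hne, hnd⟩
      rw [cycleWeight_eq_sum _ _ hnd, Equiv.Perm.formPerm_toList] at hcw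
      have hfs : (σ.toList j).toFinset = orb σ j := by
        ext i
        simp only [List.mem_toFinset, Equiv.Perm.mem_toList_iff, mem_orb]
        exact ⟨fun h => h.1, fun h => ⟨h, hmem⟩⟩
      rw [hfs] at hcw
      calc ∑ i ∈ orb σ j, A i (σ i)
          = ∑ i ∈ orb σ j, A i (σ.cycleOf j i) := by
            apply Finset.sum_congr rfl
            intro i hi
            rw [Equiv.Perm.cycleOf_apply, if_pos (mem_orb.mp hi)]
        _ ≤ 0 := hcw
  -- Step 3 : no entry A i (σ i) is ⊤
  have htop : ∀ i, A i (σ i) ≠ ⊤ := by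
    intro i hit
    have h1 := horb_le i
    have h2 : ∑ k ∈ orb σ i, A k (σ k) = ⊤ := by
      rw [← Finset.add_sum_erase _ _ (self_mem_orb σ i), hit,
        EReal.top_add_of_ne_bot (sum_ne_bot _ _ (fun k _ => hbot k))]
    rw [h2] at h1
    simp at h1
  -- the real entries
  set r : Fin n → ℝ := fun i => (A i (σ i)).toReal with hrdef
  have hdr : ∀ i, A i (σ i) = (r i : EReal) := fun i =>
    (EReal.coe_toReal (htop i) (hbot i)).symm
  -- orbit sums of r are ≤ 0
  have horb_r_le : ∀ j, ∑ i ∈ orb σ j, r i ≤ 0 := by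
    intro j
    have h := horb_le j
    rw [Finset.sum_congr rfl (fun i _ => hdr i), ← coe_finset_sum] at h
    exact_mod_cast h
  -- Step F2 : orbit sums of r are ≥ 0, hence = 0
  have horb_r : ∀ j, ∑ i ∈ orb σ j, r i = 0 := by
    intro j
    refine le_antisymm (horb_r_le j) ?_
    have hρ := hσ (σ * (σ.cycleOf j)⁻¹)
    have hρval : ∀ i, (σ * (σ.cycleOf j)⁻¹) i = if σ.SameCycle j i then i else σ i := by
      intro i
      rw [Equiv.Perm.mul_apply, Equiv.Perm.cycleOf_inv, Equiv.Perm.cycleOf_apply]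
      by_cases h : σ.SameCycle j i
      · rw [if_pos (Equiv.Perm.sameCycle_inv.mpr h), if_pos h, Equiv.Perm.coe_inv, Equiv.apply_symm_apply]
      · rw [if_neg (fun hc => h (Equiv.Perm.sameCycle_inv.mp hc)), if_neg h]
    have hsplitL : ∑ i, A i ((σ * (σ.cycleOf j)⁻¹) i)
        = ∑ i ∈ (orb σ j)ᶜ, (r i : EReal) := by
      rw [← Finset.sum_add_sum_compl (orb σ j)]
      have h1 : ∑ i ∈ orb σ j, A i ((σ * (σ.cycleOf j)⁻¹) i) = 0 := by
        apply Finset.sum_eq_zero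
        intro i hi
        rw [hρval i, if_pos (mem_orb.mp hi), hdiag]
      have h2 : ∑ i ∈ (orb σ j)ᶜ, A i ((σ * (σ.cycleOf j)⁻¹) i)
          = ∑ i ∈ (orb σ j)ᶜ, (r i : EReal) := by
        apply Finset.sum_congr rfl
        intro i hi
        rw [hρval i, if_neg (fun hc => (Finset.mem_compl.mp hi) (mem_orb.mpr hc)), hdr i]
      rw [h1, h2, zero_add]
    have hsplitR : ∑ i, A i (σ i)
        = ∑ i ∈ orb σ j, (r i : EReal) + ∑ i ∈ (orb σ j)ᶜ, (r i : EReal) := by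
      rw [← Finset.sum_add_sum_compl (orb σ j)]
      congr 1
      · exact Finset.sum_congr rfl (fun i _ => hdr i)
      · exact Finset.sum_congr rfl (fun i _ => hdr i)
    rw [hsplitL, hsplitR, ← coe_finset_sum, ← coe_finset_sum, ← EReal.coe_add] at hρ
    have := EReal.coe_le_coe_iff.mp hρ
    linarith
  -- the definite form
  set A' : Matrix (Fin n) (Fin n) EReal := fun i j => A i (σ j) - A j (σ j) with hA'
  have hA'entry : ∀ i j, A' i j = A i (σ j) + ((-(r j) : ℝ) : EReal) := by
    intro i j
    rw [hA']
    simp only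
    rw [hdr j, EReal.coe_neg, sub_eq_add_neg]
  -- A' is definite
  have hA'diag : ∀ i, A' i i = 0 := by
    intro i
    rw [hA'entry i i, hdr i, ← EReal.coe_add]
    norm_num
  have hA'cb : CycleBound A' := by
    intro l ⟨hne, hnd⟩
    rw [cycleWeight_eq_sum _ _ hnd]
    have hmaps : ∀ i ∈ l.toFinset, l.formPerm i ∈ l.toFinset := by
      intro i hi
      rw [List.mem_toFinset] at *
      exact List.formPerm_apply_mem_of_mem hi
    have hterm : ∀ i ∈ l.toFinset, A' i (l.formPerm i)
        = A i (σ (l.formPerm i)) + ((-(r (l.formPerm i)) : ℝ) : EReal) :=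
      fun i _ => hA'entry i (l.formPerm i)
    rw [Finset.sum_congr rfl hterm, Finset.sum_add_distrib, ← coe_finset_sum]
    have hre : ∑ i ∈ l.toFinset, (-(r (l.formPerm i))) = -(∑ i ∈ l.toFinset, r i) := by
      rw [← Finset.sum_neg_distrib]
      exact sum_perm_on l.formPerm l.toFinset hmaps (fun i => -(r i))
    rw [hre]
    -- main inequality from maximality of σ applied to σ * formPerm
    set Rl : ℝ := ∑ i ∈ l.toFinset, r i with hRl
    have hW : ∑ i ∈ l.toFinset, A i (σ (l.formPerm i)) ≤ (Rl : EReal) := by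
      have hρ := hσ (σ * l.formPerm)
      have hsplitL : ∑ i, A i ((σ * l.formPerm) i)
          = ∑ i ∈ l.toFinset, A i (σ (l.formPerm i))
            + ((∑ i ∈ l.toFinsetᶜ, r i : ℝ) : EReal) := by
        rw [← Finset.sum_add_sum_compl l.toFinset]
        have h1 : ∑ i ∈ l.toFinset, A i ((σ * l.formPerm) i)
            = ∑ i ∈ l.toFinset, A i (σ (l.formPerm i)) := by
          refine Finset.sum_congr rfl fun i _ => ?_
          rw [Equiv.Perm.mul_apply]
        have h2 : ∑ i ∈ l.toFinsetᶜ, A i ((σ * l.formPerm) i)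
            = ∑ i ∈ l.toFinsetᶜ, (r i : EReal) := by
          refine Finset.sum_congr rfl fun i hi => ?_
          rw [Equiv.Perm.mul_apply, List.formPerm_apply_of_notMem
            (fun hc => (Finset.mem_compl.mp hi) (List.mem_toFinset.mpr hc)), hdr i]
        rw [h1, h2, coe_finset_sum]
      have hsplitR : ∑ i, A i (σ i) = ((Rl + ∑ i ∈ l.toFinsetᶜ, r i : ℝ) : EReal) := by
        rw [← Finset.sum_add_sum_compl l.toFinset, EReal.coe_add, coe_finset_sum,
          coe_finset_sum]
        congr 1
        · exact Finset.sum_congr rfl (fun i _ => hdr i)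
        · exact Finset.sum_congr rfl (fun i _ => hdr i)
      rw [hsplitL, hsplitR] at hρ
      have hle2 : ∑ i ∈ l.toFinset, A i (σ (l.formPerm i))
          ≤ ((Rl + ∑ i ∈ l.toFinsetᶜ, r i : ℝ) : EReal) - ((∑ i ∈ l.toFinsetᶜ, r i : ℝ) : EReal) := by
        rw [EReal.le_sub_iff_add_le (Or.inl (EReal.coe_ne_bot _)) (Or.inl (EReal.coe_ne_top _))]
        exact hρ
      calc ∑ i ∈ l.toFinset, A i (σ (l.formPerm i))
          ≤ ((Rl + ∑ i ∈ l.toFinsetᶜ, r i : ℝ) : EReal) - ((∑ i ∈ l.toFinsetᶜ, r i : ℝ) : EReal) :=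
            hle2
        _ = (Rl : EReal) := by rw [← EReal.coe_sub]; norm_num
    calc ∑ i ∈ l.toFinset, A i (σ (l.formPerm i)) + ((-Rl : ℝ) : EReal)
        ≤ (Rl : EReal) + ((-Rl : ℝ) : EReal) := add_le_add_left hW _
      _ = 0 := by rw [← EReal.coe_add]; norm_num
  -- the eigenspaces agree
  have heig : eig A' = eig A := by
    ext x
    simp only [eig, Set.mem_setOf_eq]
    constructor
    · -- x eigenvector of A' → eigenvector of A
      intro hx
      have hxi : ∀ i, (⨆ k, A' i k + x k) = x i := fun i => congrFun hx i
      -- apply keyL with τ = σ⁻¹ and r' j = -(r (σ⁻¹ j))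
      have hA'd : ∀ j, A' j (σ⁻¹ j) = ((-(r (σ⁻¹ j)) : ℝ) : EReal) := by
        intro j
        rw [hA'entry j (σ⁻¹ j), Equiv.Perm.coe_inv, Equiv.apply_symm_apply, hdiag, zero_add]
      have hle : ∀ j, ((-(r (σ⁻¹ j)) : ℝ) : EReal) + x (σ⁻¹ j) ≤ x j := by
        intro j
        rw [← hA'd j, ← hxi j]
        exact le_iSup (fun k => A' j k + x k) (σ⁻¹ j)
      have hcyc' : ∀ j, ∑ i ∈ orb σ⁻¹ j, -(r (σ⁻¹ i)) = 0 := by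
        intro j
        have horbinv : orb σ⁻¹ j = orb σ j := by
          ext i
          simp only [mem_orb]
          exact Equiv.Perm.sameCycle_inv
        rw [horbinv, Finset.sum_neg_distrib,
          sum_perm_on σ⁻¹ (orb σ j) (fun i hi => inv_apply_mem_orb hi) r, horb_r j, neg_zero]
      have hE := keyL σ⁻¹ (fun j => -(r (σ⁻¹ j))) x hle hcyc'
      -- so x (σ k) = -(r k) + x k for all k
      have hE' : ∀ k, x (σ k) = ((-(r k) : ℝ) : EReal) + x k := by
        intro k
        have := hE (σ k)
        simp only [Equiv.Perm.coe_inv, Equiv.symm_apply_apply] at this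
        exact this.symm
      funext i
      show (⨆ k, A i k + x k) = x i
      rw [← σ.iSup_comp (g := fun k => A i k + x k)]
      have : ∀ j, A i (σ j) + x (σ j) = A' i j + x j := by
        intro j
        rw [hE' j, hA'entry i j, add_assoc]
      calc (⨆ j, A i (σ j) + x (σ j)) = ⨆ j, A' i j + x j := by
            exact iSup_congr this
        _ = x i := hxi i
    · -- x eigenvector of A → eigenvector of A'
      intro hx
      have hxi : ∀ i, (⨆ k, A i k + x k) = x i := fun i => congrFun hx i
      have hle : ∀ j, ((r j : ℝ) : EReal) + x (σ j) ≤ x j := by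
        intro j
        rw [← hdr j, ← hxi j]
        exact le_iSup (fun k => A j k + x k) (σ j)
      have hE := keyL σ r x hle horb_r
      -- so x (σ j) = -(r j) + x j
      have hE' : ∀ j, x (σ j) = ((-(r j) : ℝ) : EReal) + x j := by
        intro j
        rw [← hE j, EReal.coe_neg, ← add_assoc, ← EReal.coe_neg, ← EReal.coe_add]
        norm_num
      funext i
      show (⨆ j, A' i j + x j) = x i
      have hterm : ∀ j, A' i j + x j = A i (σ j) + x (σ j) := by
        intro j
        rw [hA'entry i j, add_assoc, ← hE' j]
      rw [iSup_congr hterm, σ.iSup_comp (g := fun k => A i k + x k)]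
      exact hxi i
  exact ⟨⟨hA'cb, hA'diag⟩, heig⟩

end MaxPlus
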